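/- Let H be an ℓ-group and let π, ρ be smooth admissible representations of H. Then the smooth vectors of Hom_ℂ(π, ρ) under the action (h·φ)(v) = h·φ(h⁻¹v) of H × H (or of H acting on both sides) satisfy Hom_ℂ(π,ρ)^∞ ≅ π̃ ⊗ ρ, where π̃ is the smooth dual of π. -/

import Mathlib

open TensorProduct

/-- A representation of a topological group is smooth if every vector has an open
stabilizer. -/
def IsSmoothRep {H V : Type*} [Group H] [TopologicalSpace H]
    [AddCommGroup V] [Module ℂ V] (π : Representation ℂ H V) : Prop :=
  ∀ v : V, IsOpen {g : H | π g v = v}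

/-- The submodule of `K`-invariant vectors. -/
def invariantsSubmodule {H V : Type*} [Group H] [AddCommGroup V] [Module ℂ V]
    (π : Representation ℂ H V) (K : Subgroup H) : Submodule ℂ V where
  carrier := {v | ∀ g ∈ K, π g v = v}
  add_mem' := by intro a b ha hb g hg; simp [map_add, ha g hg, hb g hg]
  zero_mem' := by intro g hg; simp
  smul_mem' := by intro c a ha g hg; simp [ha g hg]

/-- Admissibility: finite-dimensional invariants for every compact open subgroup. -/
def IsAdmissibleRep {H V : Type*} [Group H] [TopologicalSpace H]
    [AddCommGroup V] [Module ℂ V] (π : Representation ℂ H V) : Prop :=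
  ∀ K : Subgroup H, IsOpen (K : Set H) → IsCompact (K : Set H) →
    FiniteDimensional ℂ (invariantsSubmodule π K)

/-- The smooth dual `π̃` of a representation, as a space of linear functionals
fixed by some open subgroup. -/
noncomputable def SmoothDual {H V : Type*} [Group H] [TopologicalSpace H]
    [AddCommGroup V] [Module ℂ V] (π : Representation ℂ H V) :
    Submodule ℂ (V →ₗ[ℂ] ℂ) where
  carrier := {ψ | ∃ U : Subgroup H, IsOpen (U : Set H) ∧ ∀ g ∈ U, ∀ v : V, ψ (π g v) = ψ v}
  add_mem' := by
    rintro ψ χ ⟨U₁, hU₁, h₁⟩ ⟨U₂, hU₂, h₂⟩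
    refine ⟨U₁ ⊓ U₂, by simpa using hU₁.inter hU₂, fun g hg v => ?_⟩
    rcases Subgroup.mem_inf.mp hg with ⟨hg₁, hg₂⟩
    simp [LinearMap.add_apply, h₁ g hg₁ v, h₂ g hg₂ v]
  zero_mem' := ⟨⊤, by simp, fun g _ v => rfl⟩
  smul_mem' := by
    rintro c ψ ⟨U, hU, h⟩
    exact ⟨U, hU, fun g hg v => by simp [h g hg v]⟩

/-- The canonical map `π̃ ⊗ ρ → Hom_ℂ(π, ρ)`, `ψ ⊗ w ↦ (v ↦ ψ(v) • w)`. -/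
noncomputable def dualTensorToHom {H : Type*} [Group H] [TopologicalSpace H]
    {Vπ Vρ : Type*} [AddCommGroup Vπ] [Module ℂ Vπ] [AddCommGroup Vρ] [Module ℂ Vρ]
    (π : Representation ℂ H Vπ) :
    (↥(SmoothDual π) ⊗[ℂ] Vρ) →ₗ[ℂ] (Vπ →ₗ[ℂ] Vρ) :=
  TensorProduct.lift (LinearMap.smulRightₗ.comp (SmoothDual π).subtype)

/-- Van Dantzig: a locally compact totally disconnected Hausdorff group has a
compact open subgroup. -/
theorem exists_compact_open_subgroup (H : Type*) [Group H] [TopologicalSpace H]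
    [IsTopologicalGroup H] [LocallyCompactSpace H] [TotallyDisconnectedSpace H] [T2Space H] :
    ∃ K : Subgroup H, IsOpen (K : Set H) ∧ IsCompact (K : Set H) := by
  obtain ⟨s, hs_cpt, hs_int, -⟩ := exists_compact_subset isOpen_univ (Set.mem_univ (1 : H))
  obtain ⟨C, hC_clopen, h1C, hC_sub⟩ :=
    (loc_compact_Haus_tot_disc_of_zero_dim (H := H)).mem_nhds_iff.mp
      (isOpen_interior.mem_nhds hs_int)
  have hC_cpt : IsCompact C :=
    hs_cpt.of_isClosed_subset hC_clopen.isClosed (hC_sub.trans interior_subset)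
  obtain ⟨V, hV, hVC⟩ := compact_open_separated_mul_left hC_cpt hC_clopen.isOpen subset_rfl
  obtain ⟨O, hOV, hO_open, h1O⟩ := mem_nhds_iff.mp hV
  set S := O ∩ O⁻¹ with hS_def
  have hS_open : IsOpen S := hO_open.inter hO_open.inv
  have h1S : (1 : H) ∈ S := ⟨h1O, by simpa using h1O⟩
  have hmul : ∀ x ∈ S, ∀ c ∈ C, x * c ∈ C := fun x hx c hc =>
    hVC (Set.mul_mem_mul (hOV hx.1) hc)
  have hinv : ∀ x ∈ S, x⁻¹ ∈ S := fun x hx => ⟨hx.2, by simpa using hx.1⟩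
  have hopen : IsOpen ((Subgroup.closure S : Subgroup H) : Set H) :=
    Subgroup.isOpen_of_mem_nhds _
      (Filter.mem_of_superset (hS_open.mem_nhds h1S) Subgroup.subset_closure)
  refine ⟨Subgroup.closure S, hopen, ?_⟩
  have hsub : ((Subgroup.closure S : Subgroup H) : Set H) ⊆ C := by
    intro g hg
    have key : ∀ c ∈ C, g * c ∈ C ∧ g⁻¹ * c ∈ C := by
      refine Subgroup.closure_induction
        (p := fun g _ => ∀ c ∈ C, g * c ∈ C ∧ g⁻¹ * c ∈ C) ?_ ?_ ?_ ?_ hg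
      · intro x hx c hc
        exact ⟨hmul x hx c hc, hmul _ (hinv x hx) c hc⟩
      · intro c hc; exact ⟨by simpa using hc, by simpa using hc⟩
      · intro x y _ _ px py c hc
        refine ⟨?_, ?_⟩
        · rw [mul_assoc]; exact (px _ (py c hc).1).1
        · rw [mul_inv_rev, mul_assoc]; exact (py _ (px c hc).2).2
      · intro x _ px c hc
        exact ⟨(px c hc).2, by simpa using (px c hc).1⟩
    simpa using (key 1 h1C).1
  exact hC_cpt.of_isClosed_subset (Subgroup.isClosed_of_isOpen _ hopen) hsub

/-- The stabilizer of a vector, as a subgroup. -/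
def repStabilizer {H V : Type*} [Group H] [AddCommGroup V] [Module ℂ V]
    (ρ : Representation ℂ H V) (w : V) : Subgroup H where
  carrier := {g | ρ g w = w}
  one_mem' := by simp
  mul_mem' := by
    intro a b ha hb
    simp only [Set.mem_setOf_eq] at *
    rw [map_mul, Module.End.mul_apply, hb, ha]
  inv_mem' := by
    intro a ha
    simp only [Set.mem_setOf_eq] at *
    calc ρ a⁻¹ w = ρ a⁻¹ (ρ a w) := by rw [ha]
    _ = ρ (a⁻¹ * a) w := by rw [map_mul, Module.End.mul_apply]
    _ = w := by simp

lemma dualTensorToHom_tmul_apply {H : Type*} [Group H] [TopologicalSpace H]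
    {Vπ Vρ : Type*} [AddCommGroup Vπ] [Module ℂ Vπ] [AddCommGroup Vρ] [Module ℂ Vρ]
    (π : Representation ℂ H Vπ) (ψ : SmoothDual π) (w : Vρ) (v : Vπ) :
    dualTensorToHom π (ψ ⊗ₜ[ℂ] w) v = (ψ : Vπ →ₗ[ℂ] ℂ) v • w := by
  simp [dualTensorToHom]

/-- Corollary A.7: for smooth admissible representations `π`, `ρ` of an ℓ-group `H`,
the smooth vectors of `Hom_ℂ(π, ρ)` under the `H × H`-action
`((g₁,g₂)·φ)(v) = ρ(g₂) φ(π(g₁)⁻¹ v)` are exactly `π̃ ⊗ ρ`: the canonical map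
`π̃ ⊗ ρ → Hom_ℂ(π, ρ)` is injective with image the smooth vectors. -/
theorem smooth_hom_eq_dual_tensor
    (H : Type*) [Group H] [TopologicalSpace H] [IsTopologicalGroup H]
    [LocallyCompactSpace H] [TotallyDisconnectedSpace H] [T2Space H]
    (Vπ Vρ : Type*) [AddCommGroup Vπ] [Module ℂ Vπ] [AddCommGroup Vρ] [Module ℂ Vρ]
    (π : Representation ℂ H Vπ) (ρ : Representation ℂ H Vρ)
    (hπs : IsSmoothRep π) (hρs : IsSmoothRep ρ)
    (hπa : IsAdmissibleRep π) (hρa : IsAdmissibleRep ρ) :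
    Function.Injective (dualTensorToHom π (Vρ := Vρ)) ∧
    (∀ φ : Vπ →ₗ[ℂ] Vρ,
      (φ ∈ LinearMap.range (dualTensorToHom π (Vρ := Vρ))) ↔
      -- `φ` is a smooth vector of `Hom_ℂ(π, ρ)` for the `H × H`-action
      (∃ U : Subgroup H, IsOpen (U : Set H) ∧
        ∀ g ∈ U, ∀ g' ∈ U, ∀ v : Vπ, ρ g' (φ (π g⁻¹ v)) = φ v)) := by
  classical
  constructor
  · -- injectivity
    rw [injective_iff_map_eq_zero]
    intro x hx
    let 𝒞 := Module.Basis.ofVectorSpace ℂ Vρ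
    let e := TensorProduct.equivFinsuppOfBasisRight (M := ↥(SmoothDual π)) (R := ℂ) 𝒞
    have hxf : x = (e x).sum fun i ψ => ψ ⊗ₜ[ℂ] (𝒞 i : Vρ) := by
      conv_lhs => rw [← e.symm_apply_apply x]
      rw [show e.symm (e x) = (TensorProduct.equivFinsuppOfBasisRight 𝒞).symm (e x) from rfl]
      rw [TensorProduct.equivFinsuppOfBasisRight_symm_apply]
    have happ : ∀ v : Vπ, ∑ i ∈ (e x).support,
        ((e x i : Vπ →ₗ[ℂ] ℂ) v) • (𝒞 i : Vρ) = 0 := by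
      intro v
      have h0 : dualTensorToHom π x v = 0 := by rw [hx]; rfl
      rw [hxf] at h0
      rw [Finsupp.sum, map_sum] at h0
      simpa [LinearMap.sum_apply, dualTensorToHom_tmul_apply] using h0
    have hcoef : ∀ i, ∀ v : Vπ, ((e x) i : Vπ →ₗ[ℂ] ℂ) v = 0 := by
      intro i v
      by_cases hi : i ∈ (e x).support
      · exact linearIndependent_iff'.mp 𝒞.linearIndependent (e x).support
          (fun j => ((e x) j : Vπ →ₗ[ℂ] ℂ) v) (happ v) i hi
      · simp [Finsupp.notMem_support_iff.mp hi]
    have hzero : e x = 0 := by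
      ext i
      exact ZeroMemClass.coe_eq_zero.mp (LinearMap.ext (hcoef i)) ▸ rfl
    rw [hxf, hzero, Finsupp.sum_zero_index]
  · intro φ
    constructor
    · rintro ⟨x, rfl⟩
      induction x using TensorProduct.induction_on with
      | zero => exact ⟨⊤, by simp, fun g _ g' _ v => by simp⟩
      | tmul ψ w =>
        obtain ⟨U₁, hU₁, hψ⟩ := ψ.2
        refine ⟨U₁ ⊓ repStabilizer ρ w, ?_, ?_⟩
        · have : ((U₁ ⊓ repStabilizer ρ w : Subgroup H) : Set H)
              = (U₁ : Set H) ∩ {g | ρ g w = w} := rfl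
          rw [this]
          exact hU₁.inter (hρs w)
        · intro g hg g' hg' v
          rcases Subgroup.mem_inf.mp hg with ⟨hg1, -⟩
          rcases Subgroup.mem_inf.mp hg' with ⟨-, hg'2⟩
          rw [dualTensorToHom_tmul_apply, dualTensorToHom_tmul_apply, map_smul]
          rw [hψ g⁻¹ (inv_mem hg1) v]
          have hw : ρ g' w = w := hg'2
          rw [hw]
      | add a b ha hb =>
        obtain ⟨U₁, hU₁o, h₁⟩ := ha
        obtain ⟨U₂, hU₂o, h₂⟩ := hb
        refine ⟨U₁ ⊓ U₂, by simpa using hU₁o.inter hU₂o, fun g hg g' hg' v => ?_⟩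
        rcases Subgroup.mem_inf.mp hg with ⟨a1, a2⟩
        rcases Subgroup.mem_inf.mp hg' with ⟨b1, b2⟩
        rw [map_add]
        simp only [LinearMap.add_apply, map_add]
        rw [h₁ g a1 g' b1 v, h₂ g a2 g' b2 v]
    · rintro ⟨U, hUo, hU⟩
      obtain ⟨K₀, hK₀o, hK₀c⟩ := exists_compact_open_subgroup H
      set K := K₀ ⊓ U with hK_def
      have hKset : ((K : Subgroup H) : Set H) = (K₀ : Set H) ∩ (U : Set H) := rfl
      have hKo : IsOpen (K : Set H) := by rw [hKset]; exact hK₀o.inter hUo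
      have hKc : IsCompact (K : Set H) := by
        rw [hKset]
        exact hK₀c.inter_right (Subgroup.isClosed_of_isOpen U hUo)
      have hW : FiniteDimensional ℂ (invariantsSubmodule ρ K) := hρa K hKo hKc
      set W := invariantsSubmodule ρ K with hW_def
      have himg : ∀ v : Vπ, φ v ∈ W := by
        intro v g hg
        have := hU 1 (one_mem U) g hg.2 v
        simpa using this
      have hinvπ : ∀ g ∈ K, ∀ v : Vπ, φ (π g v) = φ v := by
        intro g hg v
        have := hU g⁻¹ (inv_mem hg.2) 1 (one_mem U) v
        simpa using this
      let φ' : Vπ →ₗ[ℂ] W := φ.codRestrict W himg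
      let 𝒞 := Module.finBasis ℂ W
      have hψmem : ∀ i, ((𝒞.coord i).comp φ') ∈ SmoothDual π := by
        intro i
        refine ⟨K, hKo, fun g hg v => ?_⟩
        have hφ' : φ' (π g v) = φ' v := Subtype.ext (hinvπ g hg v)
        simp [LinearMap.comp_apply, hφ']
      refine ⟨∑ i, (⟨(𝒞.coord i).comp φ', hψmem i⟩ : SmoothDual π) ⊗ₜ[ℂ] ((𝒞 i : W) : Vρ), ?_⟩
      apply LinearMap.ext; intro v
      rw [map_sum]
      simp only [LinearMap.sum_apply, dualTensorToHom_tmul_apply]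
      have hrepr : ∑ i, 𝒞.coord i (φ' v) • 𝒞 i = φ' v := by
        simpa [Module.Basis.coord_apply] using 𝒞.sum_repr (φ' v)
      have := congrArg (Subtype.val) hrepr
      rw [Submodule.coe_sum] at this
      simpa [φ'] using this
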